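/- Let X be a measurable space, k : X × X → ℝ a bounded measurable positive definite kernel, γ ∈ (0,1), q : X → ℝ and g : X → ℝ bounded measurable functions, and n ≥ 1. Let (Ω, 𝔉, P) be a probability space carrying random variables X_i : Ω → X, X'_i : Ω → X, R_i : Ω → ℝ (i = 1,…,n) such that B̂q(X_i, X'_i, R_i) is bounded and, for every i, E[ B̂q(X_i, X'_i, R_i) | 𝒢_i ] = g(X_i) almost surely, where 𝒢_i is the σ-algebra generated by (X_j, X'_j, R_j)_{j<i} together with X_i. Let c ∈ (0,∞) satisfy (B̂q(X_i, X'_i, R_i) − g(X_i))²·k(X_i, X_i) ≤ c almost surely for every i. Then for every δ ∈ (0,1), with probability at least 1 − δ, | sqrt( (1/n²) Σ_{i,j=1}^n B̂q(X_i,X'_i,R_i)·k(X_i,X_j)·B̂q(X_j,X'_j,R_j) ) − sqrt( (1/n²) Σ_{i,j=1}^n g(X_i)·k(X_i,X_j)·g(X_j) ) | ≤ sqrt( 2·c·log(2/δ) / n ). In particular, if g is identically zero, then with probability at least 1 − δ, sqrt( (1/n²) Σ_{i,j=1}^n B̂q(X_i,X'_i,R_i)·k(X_i,X_j)·B̂q(X_j,X'_j,R_j)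 ) ≤ sqrt( 2·c·log(2/δ) / n ). -/

import Mathlib

open MeasureTheory ProbabilityTheory

lemma my_sinh_le_mul_cosh {x : ℝ} (hx : 0 ≤ x) : Real.sinh x ≤ x * Real.cosh x := by
  have key : MonotoneOn (fun y : ℝ => y * Real.cosh y - Real.sinh y) (Set.Ici 0) := by
    have hder : ∀ y : ℝ, HasDerivAt (fun y : ℝ => y * Real.cosh y - Real.sinh y)
        (1 * Real.cosh y + y * Real.sinh y - Real.cosh y) y := fun y =>
      ((hasDerivAt_id y).mul (Real.hasDerivAt_cosh y)).sub (Real.hasDerivAt_sinh y)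
    apply monotoneOn_of_deriv_nonneg (convex_Ici 0)
    · exact (Continuous.sub (continuous_id.mul Real.continuous_cosh) Real.continuous_sinh).continuousOn
    · intro y _
      exact (hder y).differentiableAt.differentiableWithinAt
    · intro y hy
      rw [interior_Ici] at hy
      rw [(hder y).deriv]
      have h1 : 0 ≤ Real.sinh y := Real.sinh_nonneg_iff.mpr hy.le
      nlinarith [mul_nonneg hy.le h1]
  have := key Set.self_mem_Ici hx hx
  simp only [Real.cosh_zero, Real.sinh_zero, zero_mul, sub_zero] at this
  linarith

lemma my_cosh_le_exp_sq {x : ℝ} (hx : 0 ≤ x) : Real.cosh x ≤ Real.exp (x ^ 2 / 2) := by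
  have key : MonotoneOn (fun y : ℝ => y ^ 2 / 2 - Real.log (Real.cosh y)) (Set.Ici 0) := by
    have hder : ∀ y : ℝ, HasDerivAt (fun y : ℝ => y ^ 2 / 2 - Real.log (Real.cosh y))
        (2 * y ^ 1 / 2 - Real.sinh y / Real.cosh y) y := by
      intro y
      have h1 : HasDerivAt (fun y : ℝ => y ^ 2 / 2) (2 * y ^ 1 / 2) y := by
        simpa using (hasDerivAt_pow 2 y).div_const 2
      have h2 : HasDerivAt (fun y : ℝ => Real.log (Real.cosh y)) (Real.sinh y / Real.cosh y) y :=
        (Real.hasDerivAt_cosh y).log (Real.cosh_pos y).ne'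
      exact h1.sub h2
    apply monotoneOn_of_deriv_nonneg (convex_Ici 0)
    · exact ((continuous_pow 2).div_const 2).continuousOn.sub
        ((Real.continuous_cosh.log fun y => (Real.cosh_pos y).ne').continuousOn)
    · intro y _
      exact (hder y).differentiableAt.differentiableWithinAt
    · intro y hy
      rw [interior_Ici] at hy
      rw [(hder y).deriv]
      have h1 := my_sinh_le_mul_cosh hy.le
      have h2 := (Real.cosh_pos y)
      rw [sub_nonneg, div_le_iff₀ h2]
      calc Real.sinh y ≤ y * Real.cosh y := h1
        _ = 2 * y ^ 1 / 2 * Real.cosh y := by ring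
  have h := key Set.self_mem_Ici hx hx
  simp only [Real.cosh_zero, Real.log_one, sub_zero, ne_eq, OfNat.ofNat_ne_zero,
    not_false_eq_true, zero_pow, zero_div] at h
  have h2 : Real.log (Real.cosh x) ≤ x ^ 2 / 2 := by linarith
  calc Real.cosh x = Real.exp (Real.log (Real.cosh x)) := (Real.exp_log (Real.cosh_pos x)).symm
    _ ≤ Real.exp (x ^ 2 / 2) := Real.exp_le_exp.mpr h2

lemma my_convexOn_cosh_sqrt {l : ℝ} (hl : 0 ≤ l) :
    ConvexOn ℝ (Set.Ici 0) (fun u : ℝ => Real.cosh (l * Real.sqrt u)) := by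
  set f : ℝ → ℝ := fun u => Real.cosh (l * Real.sqrt u) with hf_def
  set g : ℝ → ℝ := fun u => Real.sinh (l * Real.sqrt u) * (l / 2 * (Real.sqrt u)⁻¹) with hg_def
  have hf' : ∀ u : ℝ, 0 < u → HasDerivAt f (g u) u := by
    intro u hu
    have h1 : HasDerivAt (fun u : ℝ => l * Real.sqrt u) (l * (1 / (2 * Real.sqrt u))) u :=
      (Real.hasDerivAt_sqrt hu.ne').const_mul l
    have h2 : HasDerivAt f (Real.sinh (l * Real.sqrt u) * (l * (1 / (2 * Real.sqrt u)))) u :=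
      by have := (Real.hasDerivAt_cosh (l * Real.sqrt u)).comp u h1; exact this
    convert h2 using 1
    have hs : Real.sqrt u ≠ 0 := (Real.sqrt_pos.mpr hu).ne'
    simp only [hg_def]; ring
  have hg' : ∀ u : ℝ, 0 < u →
      HasDerivAt g (Real.cosh (l * Real.sqrt u) * (l * (1 / (2 * Real.sqrt u))) * (l / 2 * (Real.sqrt u)⁻¹)
        + Real.sinh (l * Real.sqrt u) * (l / 2 * (-(1 / (2 * Real.sqrt u)) / (Real.sqrt u) ^ 2))) u := by
    intro u hu
    have hs : Real.sqrt u ≠ 0 := (Real.sqrt_pos.mpr hu).ne'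
    have h1 : HasDerivAt (fun u : ℝ => l * Real.sqrt u) (l * (1 / (2 * Real.sqrt u))) u :=
      (Real.hasDerivAt_sqrt hu.ne').const_mul l
    have h2 : HasDerivAt (fun u : ℝ => Real.sinh (l * Real.sqrt u))
        (Real.cosh (l * Real.sqrt u) * (l * (1 / (2 * Real.sqrt u)))) u :=
      by have := (Real.hasDerivAt_sinh (l * Real.sqrt u)).comp u h1; exact this
    have h3 : HasDerivAt (fun u : ℝ => (Real.sqrt u)⁻¹)
        (-(1 / (2 * Real.sqrt u)) / (Real.sqrt u) ^ 2) u := (Real.hasDerivAt_sqrt hu.ne').inv hs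
    exact h2.mul (h3.const_mul (l / 2))
  have hderiv_eq : ∀ u : ℝ, 0 < u → deriv f u = g u := fun u hu => (hf' u hu).deriv
  apply convexOn_of_deriv2_nonneg (convex_Ici 0)
  · exact (Real.continuous_cosh.comp (continuous_const.mul Real.continuous_sqrt)).continuousOn
  · intro u hu
    rw [interior_Ici] at hu
    exact (hf' u hu).differentiableAt.differentiableWithinAt
  · intro u hu
    rw [interior_Ici] at hu
    have hev : deriv f =ᶠ[nhds u] g :=
      Filter.eventuallyEq_of_mem (Ioi_mem_nhds hu) (fun y hy => hderiv_eq y hy)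
    exact ((hg' u hu).differentiableAt.congr_of_eventuallyEq hev).differentiableWithinAt
  · intro u hu
    rw [interior_Ici] at hu
    have hev : deriv f =ᶠ[nhds u] g :=
      Filter.eventuallyEq_of_mem (Ioi_mem_nhds hu) (fun y hy => hderiv_eq y hy)
    have h2 : deriv^[2] f u = deriv (deriv f) u := by simp [Function.iterate_succ]
    rw [h2, hev.deriv_eq, (hg' u hu).deriv]
    set s := Real.sqrt u with hs_def
    have hs : 0 < s := Real.sqrt_pos.mpr hu
    have hsu : s ^ 2 = u := Real.sq_sqrt hu.le
    have h3 : Real.sinh (l * s) ≤ (l * s) * Real.cosh (l * s) :=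
      my_sinh_le_mul_cosh (by positivity)
    have h4 : 0 < Real.cosh (l * s) := Real.cosh_pos _
    have key : l * Real.sinh (l * s) ≤ l ^ 2 * s * Real.cosh (l * s) := by nlinarith
    have e1 : Real.cosh (l * s) * (l * (1 / (2 * s))) * (l / 2 * s⁻¹)
        + Real.sinh (l * s) * (l / 2 * (-(1 / (2 * s)) / s ^ 2))
        = (l ^ 2 * s * Real.cosh (l * s) - l * Real.sinh (l * s)) / (4 * s ^ 3) := by
      field_simp
      ring
    rw [e1]
    apply div_nonneg (by linarith) (by positivity)

lemma my_chord {l β a w : ℝ} (hl : 0 ≤ l) (hβ : 0 < β) (ha : 0 ≤ a) (hw : |w| ≤ β) :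
    Real.cosh (l * Real.sqrt (a ^ 2 + 2 * a * w + β ^ 2)) ≤
      Real.cosh (l * a) * Real.cosh (l * β)
        + w * (Real.sinh (l * a) * Real.sinh (l * β) / β) := by
  obtain ⟨hw1, hw2⟩ := abs_le.mp hw
  set t := (β + w) / (2 * β) with ht_def
  have ht0 : 0 ≤ t := by
    apply div_nonneg (by linarith) (by linarith)
  have ht1 : t ≤ 1 := by
    rw [ht_def, div_le_one (by linarith)]; linarith
  have hmem1 : (a - β) ^ 2 ∈ Set.Ici (0:ℝ) := Set.mem_Ici.mpr (sq_nonneg _)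
  have hmem2 : (a + β) ^ 2 ∈ Set.Ici (0:ℝ) := Set.mem_Ici.mpr (sq_nonneg _)
  have hcomb : (1 - t) * (a - β) ^ 2 + t * (a + β) ^ 2 = a ^ 2 + 2 * a * w + β ^ 2 := by
    rw [ht_def]
    field_simp
    ring
  have hcvx := (my_convexOn_cosh_sqrt hl).2 hmem1 hmem2 (by linarith : (0:ℝ) ≤ 1 - t) ht0
    (by ring : 1 - t + t = 1)
  simp only [smul_eq_mul] at hcvx
  rw [hcomb] at hcvx
  have e1 : Real.sqrt ((a - β) ^ 2) = |a - β| := Real.sqrt_sq_eq_abs _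
  have e2 : Real.sqrt ((a + β) ^ 2) = a + β := Real.sqrt_sq (by linarith)
  rw [e1, e2] at hcvx
  have e3 : Real.cosh (l * |a - β|) = Real.cosh (l * (a - β)) := by
    rw [show l * |a - β| = |l * (a - β)| by rw [abs_mul, abs_of_nonneg hl], Real.cosh_abs]
  rw [e3] at hcvx
  have e4 : l * (a - β) = l * a - l * β := by ring
  have e5 : l * (a + β) = l * a + l * β := by ring
  rw [e4, e5, Real.cosh_sub, Real.cosh_add] at hcvx
  refine hcvx.trans (le_of_eq ?_)
  rw [ht_def]
  field_simp
  ring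

def myIp {N : ℕ} (K : Fin N → Fin N → ℝ) (u v : Fin N → ℝ) : ℝ :=
  ∑ i, ∑ j, u i * K i j * v j

lemma myIp_symm {N : ℕ} {K : Fin N → Fin N → ℝ} (hsym : ∀ i j, K i j = K j i)
    (u v : Fin N → ℝ) : myIp K u v = myIp K v u := by
  unfold myIp
  rw [Finset.sum_comm]
  refine Finset.sum_congr rfl fun i _ => Finset.sum_congr rfl fun j _ => ?_
  rw [hsym j i]; ring

lemma myIp_comb {N : ℕ} {K : Fin N → Fin N → ℝ} (t : ℝ) (u v : Fin N → ℝ) :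
    myIp K (fun i => t * u i + v i) (fun i => t * u i + v i)
      = t ^ 2 * myIp K u u + t * myIp K u v + t * myIp K v u + myIp K v v := by
  unfold myIp
  have h : ∀ i j : Fin N, (t * u i + v i) * K i j * (t * u j + v j)
      = t ^ 2 * (u i * K i j * u j) + t * (u i * K i j * v j)
        + t * (v i * K i j * u j) + v i * K i j * v j := by intros; ring
  simp only [h, Finset.sum_add_distrib, ← Finset.mul_sum]

lemma myIp_expand {N : ℕ} {K : Fin N → Fin N → ℝ} (hsym : ∀ i j, K i j = K j i)
    (u v : Fin N → ℝ) :
    myIp K (fun i => u i + v i) (fun i => u i + v i)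
      = myIp K u u + 2 * myIp K u v + myIp K v v := by
  have := myIp_comb (K := K) 1 u v
  simp only [one_mul, one_pow] at this
  rw [this, myIp_symm hsym v u]; ring

lemma myIp_sq_le {N : ℕ} {K : Fin N → Fin N → ℝ} (hsym : ∀ i j, K i j = K j i)
    (hpos : ∀ u : Fin N → ℝ, 0 ≤ myIp K u u) (u v : Fin N → ℝ) :
    (myIp K u v) ^ 2 ≤ myIp K u u * myIp K v v := by
  have key : ∀ t : ℝ, 0 ≤ myIp K u u * (t * t) + (2 * myIp K u v) * t + myIp K v v := by
    intro t
    have h := hpos (fun i => t * u i + v i)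
    rw [myIp_comb t u v, myIp_symm hsym v u] at h
    nlinarith [h]
  have := discrim_le_zero key
  rw [discrim] at this
  nlinarith [this]

lemma mySqrt_triangle {N : ℕ} {K : Fin N → Fin N → ℝ} (hsym : ∀ i j, K i j = K j i)
    (hpos : ∀ u : Fin N → ℝ, 0 ≤ myIp K u u) (u v : Fin N → ℝ) :
    Real.sqrt (myIp K (fun i => u i + v i) (fun i => u i + v i))
      ≤ Real.sqrt (myIp K u u) + Real.sqrt (myIp K v v) := by
  have h1 : myIp K u v ≤ Real.sqrt (myIp K u u) * Real.sqrt (myIp K v v) := by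
    have h2 := myIp_sq_le hsym hpos u v
    have h3 : |myIp K u v| = Real.sqrt ((myIp K u v) ^ 2) := (Real.sqrt_sq_eq_abs _).symm
    calc myIp K u v ≤ |myIp K u v| := le_abs_self _
      _ = Real.sqrt ((myIp K u v) ^ 2) := h3
      _ ≤ Real.sqrt (myIp K u u * myIp K v v) := Real.sqrt_le_sqrt h2
      _ = Real.sqrt (myIp K u u) * Real.sqrt (myIp K v v) := Real.sqrt_mul (hpos u) _
  rw [myIp_expand hsym u v]
  have h4 : myIp K u u + 2 * myIp K u v + myIp K v v
      ≤ (Real.sqrt (myIp K u u) + Real.sqrt (myIp K v v)) ^ 2 := by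
    have e1 : Real.sqrt (myIp K u u) ^ 2 = myIp K u u := Real.sq_sqrt (hpos u)
    have e2 : Real.sqrt (myIp K v v) ^ 2 = myIp K v v := Real.sq_sqrt (hpos v)
    nlinarith [h1]
  calc Real.sqrt (myIp K u u + 2 * myIp K u v + myIp K v v)
      ≤ Real.sqrt ((Real.sqrt (myIp K u u) + Real.sqrt (myIp K v v)) ^ 2) :=
        Real.sqrt_le_sqrt h4
    _ = Real.sqrt (myIp K u u) + Real.sqrt (myIp K v v) := Real.sqrt_sq
        (by positivity)

lemma mySqrt_rev_triangle {N : ℕ} {K : Fin N → Fin N → ℝ} (hsym : ∀ i j, K i j = K j i)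
    (hpos : ∀ u : Fin N → ℝ, 0 ≤ myIp K u u) (u v : Fin N → ℝ) :
    |Real.sqrt (myIp K u u) - Real.sqrt (myIp K v v)|
      ≤ Real.sqrt (myIp K (fun i => u i - v i) (fun i => u i - v i)) := by
  rw [abs_sub_le_iff]
  constructor
  · have h := mySqrt_triangle hsym hpos (fun i => u i - v i) v
    simp only [sub_add_cancel] at h
    linarith
  · have h := mySqrt_triangle hsym hpos (fun i => v i - u i) u
    simp only [sub_add_cancel] at h
    have e : myIp K (fun i => v i - u i) (fun i => v i - u i)
        = myIp K (fun i => u i - v i) (fun i => u i - v i) := by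
      unfold myIp
      refine Finset.sum_congr rfl fun i _ => Finset.sum_congr rfl fun j _ => by ring
    rw [e] at h
    linarith

set_option maxHeartbeats 2000000 in
/-- Concentration inequality for the kernel Bellman loss (Theorem 4.1 / `thm:Lqpimain2`).
`Xs i, Xs' i, Rs i` are the transition data, `𝒢 i` is the σ-algebra generated by the
first `i - 1` transition tuples together with `Xs i`, and the conditional expectation of the
empirical Bellman residual `q (Xs i) - γ * q (Xs' i) - Rs i` given `𝒢 i` is `g (Xs i)`
(in the paper `g = R⋆q`, the expected Bellman residual, and `g = 0` when `q = q⋆`). -/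
theorem stmt_0
    {X : Type*} [MeasurableSpace X]
    (k : X → X → ℝ)
    (hk_meas : Measurable (fun p : X × X => k p.1 p.2))
    (hk_bdd : ∃ Ck : ℝ, ∀ x x' : X, |k x x'| ≤ Ck)
    (hk_symm : ∀ x x' : X, k x x' = k x' x)
    (hk_posdef : ∀ (m : ℕ) (x : Fin m → X) (u : Fin m → ℝ),
      0 ≤ ∑ i, ∑ j, u i * k (x i) (x j) * u j)
    (γ : ℝ) (hγ : γ ∈ Set.Ioo (0 : ℝ) 1)
    (q g : X → ℝ)
    (hq_meas : Measurable q) (hq_bdd : ∃ C : ℝ, ∀ x, |q x| ≤ C)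
    (hg_meas : Measurable g) (hg_bdd : ∃ C : ℝ, ∀ x, |g x| ≤ C)
    (n : ℕ) (hn : 1 ≤ n)
    {Ω : Type*} [MeasurableSpace Ω] (P : Measure Ω) [IsProbabilityMeasure P]
    (Xs Xs' : Fin n → Ω → X) (Rs : Fin n → Ω → ℝ)
    (hXs : ∀ i, Measurable (Xs i)) (hXs' : ∀ i, Measurable (Xs' i))
    (hRs : ∀ i, Measurable (Rs i))
    (hB_bdd : ∃ C : ℝ, ∀ i ω, |q (Xs i ω) - γ * q (Xs' i ω) - Rs i ω| ≤ C)
    (𝒢 : Fin n → MeasurableSpace Ω)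
    (h𝒢 : ∀ i : Fin n, 𝒢 i =
      (⨆ (j : Fin n) (_ : (j : ℕ) < (i : ℕ)),
        MeasurableSpace.comap (fun ω => (Xs j ω, Xs' j ω, Rs j ω)) inferInstance)
      ⊔ MeasurableSpace.comap (Xs i) inferInstance)
    (hcond : ∀ i : Fin n,
      P[(fun ω => q (Xs i ω) - γ * q (Xs' i ω) - Rs i ω) | 𝒢 i]
        =ᵐ[P] fun ω => g (Xs i ω))
    (c : ℝ) (hc : 0 < c)
    (hcb : ∀ i : Fin n, ∀ᵐ ω ∂P,
      (q (Xs i ω) - γ * q (Xs' i ω) - Rs i ω - g (Xs i ω)) ^ 2 * k (Xs i ω) (Xs i ω) ≤ c)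
    (δ : ℝ) (hδ : δ ∈ Set.Ioo (0 : ℝ) 1) :
    ENNReal.ofReal (1 - δ) ≤
      P {ω | |Real.sqrt ((1 / (n : ℝ) ^ 2) * ∑ i : Fin n, ∑ j : Fin n,
            (q (Xs i ω) - γ * q (Xs' i ω) - Rs i ω) * k (Xs i ω) (Xs j ω) *
              (q (Xs j ω) - γ * q (Xs' j ω) - Rs j ω))
          - Real.sqrt ((1 / (n : ℝ) ^ 2) * ∑ i : Fin n, ∑ j : Fin n,
            g (Xs i ω) * k (Xs i ω) (Xs j ω) * g (Xs j ω))|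
          ≤ Real.sqrt (2 * c * Real.log (2 / δ) / n)}
    ∧ (g = 0 →
      ENNReal.ofReal (1 - δ) ≤
        P {ω | Real.sqrt ((1 / (n : ℝ) ^ 2) * ∑ i : Fin n, ∑ j : Fin n,
              (q (Xs i ω) - γ * q (Xs' i ω) - Rs i ω) * k (Xs i ω) (Xs j ω) *
                (q (Xs j ω) - γ * q (Xs' j ω) - Rs j ω))
            ≤ Real.sqrt (2 * c * Real.log (2 / δ) / n)}) := by
  obtain ⟨hδ0, hδ1⟩ := hδ
  obtain ⟨CB, hCB⟩ := hB_bdd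
  obtain ⟨Ck0, hCk0⟩ := hk_bdd
  obtain ⟨Cg, hCg⟩ := hg_bdd
  set Ck : ℝ := max Ck0 0 with hCk_def
  have hCk : ∀ x x' : X, |k x x'| ≤ Ck := fun x x' => (hCk0 x x').trans (le_max_left _ _)
  have hCknn : 0 ≤ Ck := le_max_right _ _
  set Cα : ℝ := max (CB + Cg) 0 with hCα_def
  have hCαnn : 0 ≤ Cα := le_max_right _ _
  set A : Fin n → Ω → ℝ :=
    fun i ω => q (Xs i ω) - γ * q (Xs' i ω) - Rs i ω - g (Xs i ω) with hA_def
  have hCα : ∀ (i : Fin n) (ω : Ω), |A i ω| ≤ Cα := by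
    intro i ω
    have h1 : |A i ω| ≤ CB + Cg := by
      rw [hA_def]
      calc |q (Xs i ω) - γ * q (Xs' i ω) - Rs i ω - g (Xs i ω)|
          ≤ |q (Xs i ω) - γ * q (Xs' i ω) - Rs i ω| + |g (Xs i ω)| := abs_sub _ _
        _ ≤ CB + Cg := add_le_add (hCB i ω) (hCg _)
    exact h1.trans (le_max_left _ _)
  set KM : Ω → Fin n → Fin n → ℝ := fun ω i j => k (Xs i ω) (Xs j ω) with hKM_def
  have hsym : ∀ (ω : Ω) (i j : Fin n), KM ω i j = KM ω j i := fun ω i j => hk_symm _ _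
  have hpos : ∀ (ω : Ω) (u : Fin n → ℝ), 0 ≤ myIp (KM ω) u u := by
    intro ω u
    simpa [myIp, hKM_def] using hk_posdef n (fun i => Xs i ω) u
  set W : ℕ → Ω → Fin n → ℝ := fun m ω i => if (i : ℕ) < m then A i ω else 0 with hW_def
  set Qf : ℕ → Ω → ℝ := fun m ω => myIp (KM ω) (W m ω) (W m ω) with hQf_def
  set Nf : ℕ → Ω → ℝ := fun m ω => Real.sqrt (Qf m ω) with hNf_def
  have hQnn : ∀ m ω, 0 ≤ Qf m ω := fun m ω => hpos ω _
  have hNnn : ∀ m ω, 0 ≤ Nf m ω := fun m ω => Real.sqrt_nonneg _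
  have hWb : ∀ m ω i, |W m ω i| ≤ Cα := by
    intro m ω i
    by_cases h : (i : ℕ) < m <;> simp [hW_def, h, hCα i ω, hCαnn]
  have hQb : ∀ m ω, Qf m ω ≤ (n : ℝ) ^ 2 * (Cα ^ 2 * Ck) := by
    intro m ω
    have hterm : ∀ i j : Fin n, W m ω i * KM ω i j * W m ω j ≤ Cα ^ 2 * Ck := by
      intro i j
      calc W m ω i * KM ω i j * W m ω j ≤ |W m ω i * KM ω i j * W m ω j| := le_abs_self _
        _ = |W m ω i| * |KM ω i j| * |W m ω j| := by rw [abs_mul, abs_mul]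
        _ ≤ Cα * Ck * Cα := by
            have h1 := hWb m ω i
            have h2 : |KM ω i j| ≤ Ck := hCk (Xs i ω) (Xs j ω)
            have h3 := hWb m ω j
            have h4 : |W m ω i| * |KM ω i j| ≤ Cα * Ck :=
              mul_le_mul h1 h2 (abs_nonneg _) hCαnn
            exact mul_le_mul h4 h3 (abs_nonneg _) (by positivity)
        _ = Cα ^ 2 * Ck := by ring
    calc Qf m ω = ∑ i, ∑ j, W m ω i * KM ω i j * W m ω j := by
          simp only [hQf_def, myIp]
      _ ≤ ∑ _i : Fin n, ∑ _j : Fin n, (Cα ^ 2 * Ck) :=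
          Finset.sum_le_sum fun i _ => Finset.sum_le_sum fun j _ => hterm i j
      _ = (n : ℝ) ^ 2 * (Cα ^ 2 * Ck) := by
          simp [Finset.sum_const, Finset.card_univ, nsmul_eq_mul]; ring
  set M : ℝ := Real.sqrt ((n : ℝ) ^ 2 * (Cα ^ 2 * Ck)) with hM_def
  have hNb : ∀ m ω, Nf m ω ≤ M := fun m ω => Real.sqrt_le_sqrt (hQb m ω)
  have hA_meas : ∀ i, Measurable (A i) := by
    intro i
    rw [hA_def]
    exact (((hq_meas.comp (hXs i)).sub ((hq_meas.comp (hXs' i)).const_mul γ)).sub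
      (hRs i)).sub (hg_meas.comp (hXs i))
  have hKM_meas : ∀ i j, Measurable fun ω => KM ω i j := by
    intro i j
    rw [hKM_def]
    exact hk_meas.comp ((hXs i).prodMk (hXs j))
  have hW_meas : ∀ m i, Measurable fun ω => W m ω i := by
    intro m i
    by_cases h : (i : ℕ) < m
    · simpa [hW_def, h] using hA_meas i
    · simp [hW_def, h]
  have hQf_meas : ∀ m, Measurable (Qf m) := by
    intro m
    rw [hQf_def]
    simp only [myIp]
    exact Finset.measurable_sum _ fun i _ => Finset.measurable_sum _ fun j _ =>
      ((hW_meas m i).mul (hKM_meas i j)).mul (hW_meas m j)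
  have hNf_meas : ∀ m, Measurable (Nf m) := by
    intro m
    rw [hNf_def]
    exact Real.continuous_sqrt.measurable.comp (hQf_meas m)
  have intbdd : ∀ {f : Ω → ℝ}, Measurable f → ∀ C : ℝ, (∀ ω, |f ω| ≤ C) → Integrable f P := by
    intro f hf C hC
    refine ⟨hf.aestronglyMeasurable, ?_⟩
    exact HasFiniteIntegral.of_bounded (C := C)
      (ae_of_all _ fun ω => by simpa [Real.norm_eq_abs] using hC ω)
  set L : ℝ := Real.log (2 / δ) with hL_def
  have hL : 0 < L := Real.log_pos (by rw [lt_div_iff₀ hδ0]; linarith)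
  have hn0 : (0 : ℝ) < n := by exact_mod_cast hn
  set T : ℝ := Real.sqrt (2 * c * n * L) with hT_def
  have hTpos : 0 < T := Real.sqrt_pos.mpr (by positivity)
  have hTsq : T ^ 2 = 2 * c * n * L := Real.sq_sqrt (by positivity)
  set l : ℝ := T / (n * c) with hl_def
  have hlpos : 0 < l := by positivity
  set β : ℝ := Real.sqrt c with hβ_def
  have hβpos : 0 < β := Real.sqrt_pos.mpr hc
  have hβsq : β ^ 2 = c := Real.sq_sqrt hc.le
  have hΦ_meas : Measurable (fun a : ℝ => if a = 0 then 0 else Real.sinh (l * a) / a) := by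
    refine Measurable.ite ?_ measurable_const ?_
    · exact measurableSet_eq
    · exact (Real.measurable_sinh.comp (measurable_id.const_mul l)).div measurable_id
  have hcosh_meas : ∀ m', Measurable fun ω => Real.cosh (l * Nf m' ω) := fun m' =>
    Real.continuous_cosh.measurable.comp ((hNf_meas m').const_mul l)
  have hcoshb : ∀ (m' : ℕ) (ω : Ω), |Real.cosh (l * Nf m' ω)| ≤ Real.cosh (l * M) := by
    intro m' ω
    rw [abs_of_pos (Real.cosh_pos _), Real.cosh_le_cosh,
      abs_of_nonneg (by positivity), abs_of_nonneg (by positivity)]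
    exact mul_le_mul_of_nonneg_left (hNb m' ω) hlpos.le
  have hintcosh : ∀ m' : ℕ, Integrable (fun ω => Real.cosh (l * Nf m' ω)) P := fun m' =>
    intbdd (hcosh_meas m') _ (hcoshb m')
  have hM0 : 0 ≤ M := Real.sqrt_nonneg _
  have main : ∀ m : ℕ, m ≤ n → ∫ ω, Real.cosh (l * Nf m ω) ∂P ≤ Real.cosh (l * β) ^ m := by
    intro m
    induction m with
    | zero =>
      intro _
      have h0 : ∀ ω, Nf 0 ω = 0 := by
        intro ω
        have h1 : Qf 0 ω = 0 := by
          simp [hQf_def, myIp, hW_def]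
        simp only [hNf_def, h1, Real.sqrt_zero]
      simp [h0]
    | succ m ih =>
      intro hm1
      have hmn : m < n := lt_of_lt_of_le (Nat.lt_succ_self m) hm1
      have IH := ih hmn.le
      set im : Fin n := ⟨m, hmn⟩ with him_def
      set B : Ω → ℝ := fun ω => q (Xs im ω) - γ * q (Xs' im ω) - Rs im ω with hB_def
      set H : Ω → ℝ := fun ω => ∑ i : Fin n, if (i : ℕ) < m then A i ω * KM ω i im else 0 with hH_def
      set Φ : ℝ → ℝ := fun a => if a = 0 then 0 else Real.sinh (l * a) / a with hΦ_def2
      set V : Ω → ℝ := fun ω => H ω * Φ (Nf m ω) * (Real.sinh (l * β) / β) with hV_def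
      set dv : Ω → Fin n → ℝ := fun ω i => if i = im then A im ω else 0 with hd_def
      have him_val : (im : ℕ) = m := rfl
      have hWsucc : ∀ ω, W (m + 1) ω = fun i => W m ω i + dv ω i := by
        intro ω; funext i
        simp only [hW_def, hd_def]
        by_cases hi : i = im
        · subst hi
          simp [him_val]
        · have hiv : (i : ℕ) ≠ m := fun h => hi (Fin.ext (h.trans him_val.symm))
          by_cases h2 : (i : ℕ) < m
          · have h3 : (i : ℕ) < m + 1 := by omega
            simp [h2, h3, hi]
          · have h3 : ¬ (i : ℕ) < m + 1 := by omega
            simp [h2, h3, hi]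
      have hinner : ∀ ω, myIp (KM ω) (W m ω) (dv ω) = H ω * A im ω := by
        intro ω
        have h1 : ∀ i : Fin n, ∑ j, W m ω i * KM ω i j * dv ω j
            = W m ω i * KM ω i im * A im ω := by
          intro i
          rw [Finset.sum_eq_single im]
          · simp [hd_def]
          · intro j _ hj; simp [hd_def, hj]
          · intro h; exact absurd (Finset.mem_univ im) h
        simp only [myIp, h1]
        rw [hH_def, Finset.sum_mul]
        refine Finset.sum_congr rfl fun i _ => ?_
        by_cases hi : (i : ℕ) < m
        · simp [hW_def, hi]
        · simp [hW_def, hi]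
      have hdd : ∀ ω, myIp (KM ω) (dv ω) (dv ω) = A im ω ^ 2 * KM ω im im := by
        intro ω
        have h1 : ∀ i : Fin n, ∑ j, dv ω i * KM ω i j * dv ω j
            = dv ω i * KM ω i im * A im ω := by
          intro i
          rw [Finset.sum_eq_single im]
          · simp [hd_def]
          · intro j _ hj; simp [hd_def, hj]
          · intro h; exact absurd (Finset.mem_univ im) h
        simp only [myIp, h1]
        rw [Finset.sum_eq_single im]
        · simp [hd_def]
          try ring
        · intro j _ hj; simp [hd_def, hj]
        · intro h; exact absurd (Finset.mem_univ im) h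
      have hQsucc : ∀ ω, Qf (m + 1) ω
          = Qf m ω + 2 * (H ω * A im ω) + A im ω ^ 2 * KM ω im im := by
        intro ω
        have h := myIp_expand (hsym ω) (W m ω) (dv ω)
        calc Qf (m + 1) ω = myIp (KM ω) (W (m + 1) ω) (W (m + 1) ω) := by
              simp only [hQf_def]
          _ = myIp (KM ω) (fun i => W m ω i + dv ω i) (fun i => W m ω i + dv ω i) := by
              rw [hWsucc ω]
          _ = myIp (KM ω) (W m ω) (W m ω) + 2 * myIp (KM ω) (W m ω) (dv ω)
                + myIp (KM ω) (dv ω) (dv ω) := h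
          _ = Qf m ω + 2 * (H ω * A im ω) + A im ω ^ 2 * KM ω im im := by
              rw [hinner ω, hdd ω]
      have hCS : ∀ ω, (H ω * A im ω) ^ 2 ≤ Qf m ω * (A im ω ^ 2 * KM ω im im) := by
        intro ω
        have h := myIp_sq_le (hsym ω) (hpos ω) (W m ω) (dv ω)
        rw [hinner ω, hdd ω] at h
        simpa only [hQf_def] using h
      have hd2ae : ∀ᵐ ω ∂P, A im ω ^ 2 * KM ω im im ≤ c := by
        filter_upwards [hcb im] with ω hω
        simpa only [hA_def, hKM_def] using hω
      -- pointwise step inequality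
      have hpt : ∀ᵐ ω ∂P, Real.cosh (l * Nf (m + 1) ω)
          ≤ Real.cosh (l * Nf m ω) * Real.cosh (l * β) + A im ω * V ω := by
        filter_upwards [hd2ae] with ω hd2
        have hQa : Nf m ω ^ 2 = Qf m ω := by
          simp only [hNf_def]; exact Real.sq_sqrt (hQnn m ω)
        have ha0 : 0 ≤ Nf m ω := hNnn m ω
        by_cases hz : Nf m ω = 0
        · have hQ0 : Qf m ω = 0 := by rw [← hQa, hz]; ring
          have hin0 : H ω * A im ω = 0 := by
            have h := hCS ω
            rw [hQ0, zero_mul] at h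
            exact sq_eq_zero_iff.mp (le_antisymm h (sq_nonneg _))
          have hQs : Qf (m + 1) ω = A im ω ^ 2 * KM ω im im := by
            rw [hQsucc ω, hQ0, hin0]; ring
          have hNs : Nf (m + 1) ω ≤ β := by
            calc Nf (m + 1) ω = Real.sqrt (Qf (m + 1) ω) := by simp only [hNf_def]
              _ ≤ Real.sqrt c := Real.sqrt_le_sqrt (by rw [hQs]; exact hd2)
              _ = β := by rw [hβ_def]
          have h1 : Real.cosh (l * Nf (m + 1) ω) ≤ Real.cosh (l * β) := by
            rw [Real.cosh_le_cosh, abs_of_nonneg (by positivity),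
              abs_of_nonneg (by positivity)]
            exact mul_le_mul_of_nonneg_left hNs hlpos.le
          have h2 : A im ω * V ω = 0 := by
            rw [hV_def]
            simp only [hΦ_def2, hz, if_pos rfl]
            ring
          rw [hz, mul_zero, Real.cosh_zero, one_mul, h2, add_zero]
          exact h1
        · have hapos : 0 < Nf m ω := lt_of_le_of_ne ha0 (Ne.symm hz)
          set a := Nf m ω with ha_def
          set w := H ω * A im ω / a with hw_def
          have hd2nn : 0 ≤ A im ω ^ 2 * KM ω im im := by
            rw [← hdd ω]; exact hpos ω _
          have hw2 : w ^ 2 ≤ c := by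
            rw [hw_def, div_pow, div_le_iff₀ (by positivity)]
            calc (H ω * A im ω) ^ 2 ≤ Qf m ω * (A im ω ^ 2 * KM ω im im) := hCS ω
              _ = (A im ω ^ 2 * KM ω im im) * a ^ 2 := by rw [← hQa]; ring
              _ ≤ c * a ^ 2 := mul_le_mul_of_nonneg_right hd2 (sq_nonneg a)
          have hwβ : |w| ≤ β := by
            rw [← Real.sqrt_sq_eq_abs]
            calc Real.sqrt (w ^ 2) ≤ Real.sqrt (β ^ 2) :=
                Real.sqrt_le_sqrt (by rw [hβsq]; exact hw2)
              _ = β := Real.sqrt_sq hβpos.le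
          have haw : H ω * A im ω = a * w := by
            rw [hw_def]; field_simp
          have hQle : Qf (m + 1) ω ≤ a ^ 2 + 2 * a * w + β ^ 2 := by
            rw [hQsucc ω, haw, ← hQa, hβsq]
            have := hd2
            linarith
          have hNle : Nf (m + 1) ω ≤ Real.sqrt (a ^ 2 + 2 * a * w + β ^ 2) := by
            calc Nf (m + 1) ω = Real.sqrt (Qf (m + 1) ω) := by simp only [hNf_def]
              _ ≤ _ := Real.sqrt_le_sqrt hQle
          have hch := my_chord hlpos.le hβpos ha0 hwβ
          have hmono : Real.cosh (l * Nf (m + 1) ω)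
              ≤ Real.cosh (l * Real.sqrt (a ^ 2 + 2 * a * w + β ^ 2)) := by
            rw [Real.cosh_le_cosh, abs_of_nonneg (by positivity),
              abs_of_nonneg (by positivity)]
            exact mul_le_mul_of_nonneg_left hNle hlpos.le
          refine (hmono.trans hch).trans (le_of_eq ?_)
          rw [hV_def]
          simp only [hΦ_def2]
          rw [← ha_def, if_neg hz, hw_def]
          field_simp
      -- measurability and bounds for H, V
      have hH_meas : Measurable H := by
        rw [hH_def]
        refine Finset.measurable_sum _ fun i _ => ?_
        by_cases hi : (i : ℕ) < m
        · simp only [if_pos hi]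
          exact (hA_meas i).mul (hKM_meas i im)
        · simp only [if_neg hi]
          exact measurable_const
      have hV_meas : Measurable V := by
        rw [hV_def]
        exact (hH_meas.mul (hΦ_meas.comp (hNf_meas m))).mul_const _
      have hΦb : ∀ x : ℝ, 0 ≤ x → x ≤ M → |Φ x| ≤ l * Real.cosh (l * M) := by
        intro x hx0 hxM
        by_cases hz : x = 0
        · simp only [hΦ_def2, if_pos hz, abs_zero]
          positivity
        · have hxpos : 0 < x := lt_of_le_of_ne hx0 (Ne.symm hz)
          simp only [hΦ_def2, if_neg hz]
          rw [abs_div, abs_of_nonneg hx0, div_le_iff₀ hxpos]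
          have h1 : |Real.sinh (l * x)| = Real.sinh (l * x) :=
            abs_of_nonneg (Real.sinh_nonneg_iff.mpr (by positivity))
          rw [h1]
          calc Real.sinh (l * x) ≤ (l * x) * Real.cosh (l * x) :=
              my_sinh_le_mul_cosh (by positivity)
            _ ≤ (l * x) * Real.cosh (l * M) := by
                have h2 : Real.cosh (l * x) ≤ Real.cosh (l * M) := by
                  rw [Real.cosh_le_cosh, abs_of_nonneg (by positivity),
                    abs_of_nonneg (by positivity)]
                  exact mul_le_mul_of_nonneg_left hxM hlpos.le
                exact mul_le_mul_of_nonneg_left h2 (by positivity)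
            _ = l * Real.cosh (l * M) * x := by ring
      have hHb : ∀ ω, |H ω| ≤ n * (Cα * Ck) := by
        intro ω
        rw [hH_def]
        calc |∑ i : Fin n, if (i : ℕ) < m then A i ω * KM ω i im else 0|
            ≤ ∑ i : Fin n, |if (i : ℕ) < m then A i ω * KM ω i im else 0| :=
              Finset.abs_sum_le_sum_abs _ _
          _ ≤ ∑ _i : Fin n, Cα * Ck := by
              refine Finset.sum_le_sum fun i _ => ?_
              by_cases hi : (i : ℕ) < m
              · simp only [if_pos hi, abs_mul]
                exact mul_le_mul (hCα i ω) (hCk _ _) (abs_nonneg _) hCαnn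
              · simp only [if_neg hi, abs_zero]
                positivity
          _ = n * (Cα * Ck) := by
              simp [Finset.sum_const, Finset.card_univ, nsmul_eq_mul]
      set CV : ℝ := n * (Cα * Ck) * (l * Real.cosh (l * M)) * (|Real.sinh (l * β)| / β)
        with hCV_def
      have hVb : ∀ ω, |V ω| ≤ CV := by
        intro ω
        rw [hV_def, hCV_def]
        calc |H ω * Φ (Nf m ω) * (Real.sinh (l * β) / β)|
            = |H ω| * |Φ (Nf m ω)| * (|Real.sinh (l * β)| / β) := by
              rw [abs_mul, abs_mul, abs_div, abs_of_nonneg hβpos.le]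
          _ ≤ n * (Cα * Ck) * (l * Real.cosh (l * M)) * (|Real.sinh (l * β)| / β) := by
              have h1 := hHb ω
              have h2 := hΦb (Nf m ω) (hNnn m ω) (hNb m ω)
              have h4 : |H ω| * |Φ (Nf m ω)| ≤ n * (Cα * Ck) * (l * Real.cosh (l * M)) :=
                mul_le_mul h1 h2 (abs_nonneg _) (by positivity)
              exact mul_le_mul_of_nonneg_right h4 (by positivity)
      have hCVnn : 0 ≤ CV := by
        rw [hCV_def]
        positivity
      have hintAV : Integrable (fun ω => A im ω * V ω) P := by
        refine intbdd ((hA_meas im).mul hV_meas) (Cα * CV) fun ω => ?_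
        rw [abs_mul]
        exact mul_le_mul (hCα im ω) (hVb ω) (abs_nonneg _) hCαnn
      -- martingale: the conditional expectation of A im vanishes against V
      have hmart : ∫ ω, A im ω * V ω ∂P = 0 := by
        have hmi : 𝒢 im ≤ ‹MeasurableSpace Ω› := by
          rw [h𝒢 im]
          apply sup_le
          · refine iSup_le fun j => iSup_le fun hj => ?_
            exact measurable_iff_comap_le.mp ((hXs j).prodMk ((hXs' j).prodMk (hRs j)))
          · exact measurable_iff_comap_le.mp (hXs im)
        have hTj : ∀ j : Fin n, (j : ℕ) < m →
            Measurable[𝒢 im] (fun ω => (Xs j ω, Xs' j ω, Rs j ω)) := by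
          intro j hj
          apply measurable_iff_comap_le.mpr
          rw [h𝒢 im]
          refine le_sup_of_le_left ?_
          refine le_iSup_of_le j ?_
          exact le_iSup_of_le hj le_rfl
        have hXim_mi : Measurable[𝒢 im] (Xs im) := by
          apply measurable_iff_comap_le.mpr
          rw [h𝒢 im]
          exact le_sup_right
        have hXj_mi : ∀ j : Fin n, (j : ℕ) < m → Measurable[𝒢 im] (Xs j) := by
          intro j hj
          exact measurable_fst.comp (hTj j hj)
        have hA_mi : ∀ j : Fin n, (j : ℕ) < m → Measurable[𝒢 im] (A j) := by
          intro j hj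
          have hφ : Measurable (fun p : X × X × ℝ => q p.1 - γ * q p.2.1 - p.2.2 - g p.1) :=
            (((hq_meas.comp measurable_fst).sub
              ((hq_meas.comp (measurable_fst.comp measurable_snd)).const_mul γ)).sub
              (measurable_snd.comp measurable_snd)).sub (hg_meas.comp measurable_fst)
          have he : A j = (fun p : X × X × ℝ => q p.1 - γ * q p.2.1 - p.2.2 - g p.1)
              ∘ (fun ω => (Xs j ω, Xs' j ω, Rs j ω)) := by
            funext ω; simp [hA_def, Function.comp]
          rw [he]
          exact hφ.comp (hTj j hj)
        have hKji_mi : ∀ i j : Fin n, Measurable[𝒢 im] (Xs i) → Measurable[𝒢 im] (Xs j) →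
            Measurable[𝒢 im] (fun ω => KM ω i j) := by
          intro i j h1 h2
          rw [hKM_def]
          exact hk_meas.comp (h1.prodMk h2)
        have hH_mi : Measurable[𝒢 im] H := by
          rw [hH_def]
          refine Finset.measurable_sum _ fun i _ => ?_
          by_cases hi : (i : ℕ) < m
          · simp only [if_pos hi]
            exact (hA_mi i hi).mul (hKji_mi i im (hXj_mi i hi) hXim_mi)
          · simp only [if_neg hi]
            exact measurable_const
        have hQ_mi : Measurable[𝒢 im] (Qf m) := by
          have he : Qf m = fun ω => ∑ i : Fin n, ∑ j : Fin n,
              W m ω i * KM ω i j * W m ω j := by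
            funext ω; simp only [hQf_def, myIp]
          rw [he]
          refine Finset.measurable_sum _ fun i _ => ?_
          refine Finset.measurable_sum _ fun j _ => ?_
          by_cases hi : (i : ℕ) < m
          · by_cases hj : (j : ℕ) < m
            · simp only [hW_def, if_pos hi, if_pos hj]
              exact ((hA_mi i hi).mul
                (hKji_mi i j (hXj_mi i hi) (hXj_mi j hj))).mul (hA_mi j hj)
            · simp only [hW_def, if_neg hj, mul_zero]
              exact measurable_const
          · simp only [hW_def, if_neg hi, zero_mul]
            exact measurable_const
        have hN_mi : Measurable[𝒢 im] (Nf m) := by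
          have he : Nf m = fun ω => Real.sqrt (Qf m ω) := by
            funext ω; simp only [hNf_def]
          rw [he]
          exact Real.continuous_sqrt.measurable.comp hQ_mi
        have hV_mi : Measurable[𝒢 im] V := by
          rw [hV_def]
          exact (hH_mi.mul (hΦ_meas.comp hN_mi)).mul_const _
        have hB_meas : Measurable B := by
          rw [hB_def]
          exact ((hq_meas.comp (hXs im)).sub
            ((hq_meas.comp (hXs' im)).const_mul γ)).sub (hRs im)
        have hintB : Integrable B P := intbdd hB_meas CB (fun ω => by
          simpa [hB_def] using hCB im ω)
        have hintVB : Integrable (V * B) P := by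
          refine intbdd (hV_meas.mul hB_meas) (CV * CB) fun ω => ?_
          rw [Pi.mul_apply, abs_mul]
          exact mul_le_mul (hVb ω) (by simpa [hB_def] using hCB im ω) (abs_nonneg _) hCVnn
        have h1 : P[V * B | 𝒢 im] =ᵐ[P] V * P[B | 𝒢 im] :=
          condExp_mul_of_stronglyMeasurable_left hV_mi.stronglyMeasurable hintVB hintB
        have h2 : ∫ ω, (V * B) ω ∂P = ∫ ω, (V * P[B | 𝒢 im]) ω ∂P :=
          (integral_condExp hmi).symm.trans (integral_congr_ae h1)
        have hc2 : P[B | 𝒢 im] =ᵐ[P] fun ω => g (Xs im ω) := by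
          have h := hcond im
          rw [← hB_def] at h
          exact h
        have h3 : (V * P[B | 𝒢 im]) =ᵐ[P] fun ω => V ω * g (Xs im ω) := by
          filter_upwards [hc2] with ω hω
          simp only [Pi.mul_apply, hω]
        have hintVg : Integrable (fun ω => V ω * g (Xs im ω)) P := by
          refine intbdd (hV_meas.mul (hg_meas.comp (hXs im))) (CV * Cg) fun ω => ?_
          rw [abs_mul]
          exact mul_le_mul (hVb ω) (hCg _) (abs_nonneg _) hCVnn
        have he : (fun ω => A im ω * V ω) = fun ω => (V * B) ω - V ω * g (Xs im ω) := by
          funext ω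
          simp only [hA_def, hB_def, Pi.mul_apply]
          ring
        rw [he, integral_sub hintVB hintVg, h2, integral_congr_ae h3, sub_self]
      -- combine
      have hsum_int : Integrable (fun ω => Real.cosh (l * Nf m ω) * Real.cosh (l * β)
          + A im ω * V ω) P := ((hintcosh m).mul_const _).add hintAV
      have hstep := integral_mono_ae (hintcosh (m + 1)) hsum_int hpt
      rw [integral_add ((hintcosh m).mul_const _) hintAV, integral_mul_const, hmart,
        add_zero] at hstep
      calc ∫ ω, Real.cosh (l * Nf (m + 1) ω) ∂P
          ≤ (∫ ω, Real.cosh (l * Nf m ω) ∂P) * Real.cosh (l * β) := hstep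
        _ ≤ Real.cosh (l * β) ^ m * Real.cosh (l * β) :=
            mul_le_mul_of_nonneg_right IH (Real.cosh_pos _).le
        _ = Real.cosh (l * β) ^ (m + 1) := (pow_succ _ _).symm
  -- Chernoff bound
  have hEb : ∫ ω, Real.cosh (l * Nf n ω) ∂P ≤ Real.exp ((n : ℝ) * ((l * β) ^ 2 / 2)) := by
    calc ∫ ω, Real.cosh (l * Nf n ω) ∂P ≤ Real.cosh (l * β) ^ n := main n le_rfl
      _ ≤ Real.exp ((l * β) ^ 2 / 2) ^ n :=
          pow_le_pow_left₀ (Real.cosh_pos _).le (my_cosh_le_exp_sq (by positivity)) n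
      _ = Real.exp ((n : ℝ) * ((l * β) ^ 2 / 2)) := (Real.exp_nat_mul _ n).symm
  set E : Set Ω := {ω | T < Nf n ω} with hE_def
  have hEmeas : MeasurableSet E := measurableSet_lt measurable_const (hNf_meas n)
  have hmark : (P E).toReal * Real.cosh (l * T) ≤ ∫ ω, Real.cosh (l * Nf n ω) ∂P := by
    have h1 : ∫ _ω in E, Real.cosh (l * T) ∂P ≤ ∫ ω in E, Real.cosh (l * Nf n ω) ∂P := by
      refine setIntegral_mono_on (integrableOn_const (measure_ne_top P E))
        ((hintcosh n).integrableOn) hEmeas fun ω hω => ?_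
      rw [Real.cosh_le_cosh, abs_of_nonneg (by positivity), abs_of_nonneg (by positivity)]
      have hω' : T < Nf n ω := hω
      exact mul_le_mul_of_nonneg_left hω'.le hlpos.le
    have h2 : ∫ _ω in E, Real.cosh (l * T) ∂P = (P E).toReal * Real.cosh (l * T) := by
      rw [setIntegral_const, smul_eq_mul, measureReal_def]
    have h3 : ∫ ω in E, Real.cosh (l * Nf n ω) ∂P ≤ ∫ ω, Real.cosh (l * Nf n ω) ∂P :=
      setIntegral_le_integral (hintcosh n) (ae_of_all _ fun ω => (Real.cosh_pos _).le)
    linarith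
  have hPEr : (P E).toReal ≤ δ := by
    have hcpos : 0 < Real.cosh (l * T) := Real.cosh_pos _
    have hcoshT : Real.exp (l * T) / 2 ≤ Real.cosh (l * T) := by
      rw [Real.cosh_eq]
      have := (Real.exp_pos (-(l * T))).le
      linarith
    have h4 : (P E).toReal ≤ Real.exp ((n : ℝ) * ((l * β) ^ 2 / 2)) / Real.cosh (l * T) := by
      rw [le_div_iff₀ hcpos]
      exact hmark.trans hEb
    have h5 : Real.exp ((n : ℝ) * ((l * β) ^ 2 / 2)) / Real.cosh (l * T)
        ≤ Real.exp ((n : ℝ) * ((l * β) ^ 2 / 2)) / (Real.exp (l * T) / 2) :=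
      div_le_div_of_nonneg_left (Real.exp_pos _).le (by positivity) hcoshT
    have h6 : Real.exp ((n : ℝ) * ((l * β) ^ 2 / 2)) / (Real.exp (l * T) / 2)
        = 2 * Real.exp ((n : ℝ) * ((l * β) ^ 2 / 2) - l * T) := by
      rw [Real.exp_sub]
      field_simp
    have h7 : (n : ℝ) * ((l * β) ^ 2 / 2) - l * T = -L := by
      have hc0 : c ≠ 0 := hc.ne'
      have hn0' : (n : ℝ) ≠ 0 := hn0.ne'
      have e0 : l * T = T ^ 2 / ((n : ℝ) * c) := by
        rw [hl_def]; ring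
      have e1 : (n : ℝ) * ((l * β) ^ 2 / 2) = T ^ 2 / (2 * ((n : ℝ) * c)) := by
        rw [mul_pow, hβsq, hl_def]
        field_simp
      rw [e0, e1, hTsq]
      field_simp
      ring
    have h8 : Real.exp (-L) = δ / 2 := by
      rw [hL_def, Real.exp_neg, Real.exp_log (by positivity : (0:ℝ) < 2 / δ), inv_div]
    calc (P E).toReal ≤ Real.exp ((n : ℝ) * ((l * β) ^ 2 / 2)) / Real.cosh (l * T) := h4
      _ ≤ Real.exp ((n : ℝ) * ((l * β) ^ 2 / 2)) / (Real.exp (l * T) / 2) := h5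
      _ = 2 * Real.exp ((n : ℝ) * ((l * β) ^ 2 / 2) - l * T) := h6
      _ = 2 * Real.exp (-L) := by rw [h7]
      _ = δ := by rw [h8]; ring
  have hPE : P E ≤ ENNReal.ofReal δ := by
    rw [← ENNReal.ofReal_toReal (measure_ne_top P E)]
    exact ENNReal.ofReal_le_ofReal hPEr
  have hcompl : ENNReal.ofReal (1 - δ) ≤ P Eᶜ := by
    rw [measure_compl hEmeas (measure_ne_top P E), measure_univ]
    calc ENNReal.ofReal (1 - δ) = 1 - ENNReal.ofReal δ := by
          rw [ENNReal.ofReal_sub _ hδ0.le, ENNReal.ofReal_one]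
      _ ≤ 1 - P E := tsub_le_tsub_left hPE 1
  have hincl : Eᶜ ⊆ {ω | |Real.sqrt ((1 / (n : ℝ) ^ 2) * ∑ i : Fin n, ∑ j : Fin n,
        (q (Xs i ω) - γ * q (Xs' i ω) - Rs i ω) * k (Xs i ω) (Xs j ω) *
          (q (Xs j ω) - γ * q (Xs' j ω) - Rs j ω))
      - Real.sqrt ((1 / (n : ℝ) ^ 2) * ∑ i : Fin n, ∑ j : Fin n,
        g (Xs i ω) * k (Xs i ω) (Xs j ω) * g (Xs j ω))|
      ≤ Real.sqrt (2 * c * Real.log (2 / δ) / n)} := by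
    intro ω hω
    have hNT : Nf n ω ≤ T := not_lt.mp hω
    simp only [Set.mem_setOf_eq]
    set bv : Fin n → ℝ := fun i => q (Xs i ω) - γ * q (Xs' i ω) - Rs i ω with hbv
    set gv : Fin n → ℝ := fun i => g (Xs i ω) with hgv
    have hQBe : (∑ i : Fin n, ∑ j : Fin n,
        (q (Xs i ω) - γ * q (Xs' i ω) - Rs i ω) * k (Xs i ω) (Xs j ω) *
          (q (Xs j ω) - γ * q (Xs' j ω) - Rs j ω)) = myIp (KM ω) bv bv := by
      simp only [myIp, hKM_def, hbv]
    have hQge : (∑ i : Fin n, ∑ j : Fin n,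
        g (Xs i ω) * k (Xs i ω) (Xs j ω) * g (Xs j ω)) = myIp (KM ω) gv gv := by
      simp only [myIp, hKM_def, hgv]
    rw [hQBe, hQge]
    have hrev := mySqrt_rev_triangle (hsym ω) (hpos ω) bv gv
    have hdiff : myIp (KM ω) (fun i => bv i - gv i) (fun i => bv i - gv i) = Qf n ω := by
      have he : (fun i => bv i - gv i) = W n ω := by
        funext i
        simp only [hbv, hgv, hW_def, hA_def, if_pos i.isLt]
      rw [he]
    rw [hdiff] at hrev
    have h9 : Real.sqrt ((1 / (n : ℝ) ^ 2) * myIp (KM ω) bv bv)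
        = Real.sqrt (1 / (n : ℝ) ^ 2) * Real.sqrt (myIp (KM ω) bv bv) :=
      Real.sqrt_mul (by positivity) _
    have h10 : Real.sqrt ((1 / (n : ℝ) ^ 2) * myIp (KM ω) gv gv)
        = Real.sqrt (1 / (n : ℝ) ^ 2) * Real.sqrt (myIp (KM ω) gv gv) :=
      Real.sqrt_mul (by positivity) _
    have hsqn : Real.sqrt (1 / (n : ℝ) ^ 2) = 1 / n := by
      rw [one_div, Real.sqrt_inv, Real.sqrt_sq hn0.le, one_div]
    rw [h9, h10, hsqn]
    have habs : |1 / (n : ℝ) * Real.sqrt (myIp (KM ω) bv bv)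
          - 1 / (n : ℝ) * Real.sqrt (myIp (KM ω) gv gv)|
        = 1 / (n : ℝ) * |Real.sqrt (myIp (KM ω) bv bv)
          - Real.sqrt (myIp (KM ω) gv gv)| := by
      rw [← mul_sub, abs_mul, abs_of_nonneg (by positivity : (0:ℝ) ≤ 1 / (n:ℝ))]
    rw [habs]
    have hrhs : Real.sqrt (2 * c * L / n) = T / n := by
      have he2 : 2 * c * L / (n : ℝ) = (2 * c * (n : ℝ) * L) * (1 / (n : ℝ)) ^ 2 := by
        field_simp
      rw [he2, Real.sqrt_mul (by positivity), Real.sqrt_sq (by positivity), ← hT_def]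
      field_simp
    rw [hrhs]
    calc 1 / (n : ℝ) * |Real.sqrt (myIp (KM ω) bv bv) - Real.sqrt (myIp (KM ω) gv gv)|
        ≤ 1 / (n : ℝ) * Real.sqrt (Qf n ω) :=
          mul_le_mul_of_nonneg_left hrev (by positivity)
      _ ≤ 1 / (n : ℝ) * T := by
          have he3 : Real.sqrt (Qf n ω) = Nf n ω := by simp only [hNf_def]
          rw [he3]
          exact mul_le_mul_of_nonneg_left hNT (by positivity)
      _ = T / n := by ring
  have part1 := le_trans hcompl (measure_mono hincl)
  refine ⟨part1, fun hg0 => ?_⟩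
  subst hg0
  refine le_trans part1 (le_of_eq ?_)
  congr 1
  ext ω
  simp only [Set.mem_setOf_eq, Pi.zero_apply, zero_mul, mul_zero, Finset.sum_const_zero,
    Real.sqrt_zero, sub_zero, abs_of_nonneg (Real.sqrt_nonneg _), hL_def]
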